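/- Let r = 2^m and s = 2^n with m, n ≥ 1. There exists c ∈ F_{r^2} such that the polynomial y^{s+1} + c y^s + c^r y + 1 has no roots y in μ_{r+1} if and only if r > 2 and r + 1 does not divide s + 1. -/

import Mathlib

open Finset Polynomial

namespace Stmt12Aux

variable {K : Type} [Field K] [Fintype K]

omit [Fintype K] in
lemma pow_reduce (c : K) (N : ℕ) (hc : c ^ N = 1) {a b k : ℕ}
    (h : a = b + k * N) : c ^ a = c ^ b := by
  subst h; rw [pow_add, mul_comm k N, pow_mul, hc, one_pow, mul_one]

lemma charP_two {m : ℕ} (hcard : Fintype.card K = 2 ^ (2 * m)) : CharP K 2 := by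
  have hchar : CharP K (ringChar K) := ringChar.charP K
  have hprime : (ringChar K).Prime := CharP.char_is_prime K _
  have hdvd : ringChar K ∣ 2 ^ (2 * m) := by
    rw [← hcard]
    exact (CharP.cast_eq_zero_iff K _ _).mp (FiniteField.cast_card_eq_zero K)
  have h2 : ringChar K = 2 :=
    (Nat.prime_dvd_prime_iff_eq hprime Nat.prime_two).mp (hprime.dvd_of_dvd_pow hdvd)
  exact h2 ▸ hchar

lemma pow_card_self {m : ℕ} (hcard : Fintype.card K = 2 ^ (2 * m)) (a : K) :
    a ^ 2 ^ (2 * m) = a := by rw [← hcard]; exact FiniteField.pow_card a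

lemma pow_card_iter {m : ℕ} (hcard : Fintype.card K = 2 ^ (2 * m)) (a : K) (j : ℕ) :
    a ^ 2 ^ (2 * m * j) = a := by
  induction j with
  | zero => simp
  | succ j ih =>
    have : 2 * m * (j + 1) = 2 * m * j + 2 * m := by ring
    rw [this, pow_add, pow_mul, ih, pow_card_self hcard]

lemma pow_sub_one {m : ℕ} (hcard : Fintype.card K = 2 ^ (2 * m)) {a : K} (ha : a ≠ 0) :
    a ^ (2 ^ (2 * m) - 1) = 1 := by
  rw [← hcard]; exact FiniteField.pow_card_sub_one_eq_one a ha

lemma frob_add {m : ℕ} (hcard : Fintype.card K = 2 ^ (2 * m)) (a b : K) (k : ℕ) :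
    (a + b) ^ 2 ^ k = a ^ 2 ^ k + b ^ 2 ^ k := by
  haveI := charP_two hcard
  haveI : Fact (Nat.Prime 2) := ⟨Nat.prime_two⟩
  exact add_pow_char_pow a b 2 k

lemma frob_inj {m : ℕ} (hcard : Fintype.card K = 2 ^ (2 * m)) {a b : K} (k : ℕ)
    (h : a ^ 2 ^ k = b ^ 2 ^ k) : a = b := by
  haveI := charP_two hcard
  have h0 : (a + b) ^ 2 ^ k = 0 := by
    rw [frob_add hcard, h, CharTwo.add_self_eq_zero]
  have hab : a + b = 0 := pow_eq_zero_iff (by positivity) |>.mp h0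
  rw [add_eq_zero_iff_eq_neg, CharTwo.neg_eq] at hab
  exact hab

lemma qq_self {m : ℕ} (hcard : Fintype.card K = 2 ^ (2 * m)) (a : K) :
    (a ^ 2 ^ m) ^ 2 ^ m = a := by
  rw [← pow_mul, ← pow_add, ← two_mul]
  exact pow_card_self hcard a

lemma q2_fact (m : ℕ) : 2 ^ (2 * m) - 1 = (2 ^ m + 1) * (2 ^ m - 1) := by
  have h1 : 1 ≤ 2 ^ m := Nat.one_le_two_pow
  have h2 : 2 ^ (2 * m) = 2 ^ m * 2 ^ m := by rw [two_mul, pow_add]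
  obtain ⟨Q, hQ⟩ : ∃ Q, 2 ^ m = Q + 1 := ⟨2 ^ m - 1, by omega⟩
  rw [hQ] at h2 ⊢
  have h3 : (Q + 1) * (Q + 1) = (Q + 1 + 1) * Q + 1 := by ring
  simp only [Nat.add_sub_cancel]
  omega

variable [DecidableEq K]

lemma exists_orderOf_eq' (d : ℕ) (hd0 : 0 < d) (hd : d ∣ Fintype.card K - 1) :
    ∃ z : K, orderOf z = d := by
  obtain ⟨g, hg⟩ := IsCyclic.exists_ofOrder_eq_natCard (α := Kˣ)
  have hg' : orderOf g = Fintype.card K - 1 := by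
    rw [hg, Nat.card_eq_fintype_card, Fintype.card_units]
  obtain ⟨e, he⟩ := hd
  have hcard1 : 0 < Fintype.card K - 1 := by
    have := Fintype.one_lt_card (α := K)
    omega
  have he0 : 0 < e := by
    rcases Nat.eq_zero_or_pos e with h | h
    · subst h; omega
    · exact h
  refine ⟨((g ^ e : Kˣ) : K), ?_⟩
  rw [orderOf_units, orderOf_pow g, hg', he, Nat.gcd_eq_right ⟨d, by ring⟩,
    Nat.mul_div_cancel _ he0]

lemma card_roots_eq (d : ℕ) (hd0 : 0 < d) (hd : d ∣ Fintype.card K - 1) :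
    (univ.filter fun y : K => y ^ d = 1).card = d := by
  obtain ⟨z, hz⟩ := exists_orderOf_eq' d hd0 hd
  have hprim : IsPrimitiveRoot z d := hz ▸ IsPrimitiveRoot.orderOf z
  have : (univ.filter fun y : K => y ^ d = 1) = Polynomial.nthRootsFinset d (1 : K) := by
    ext x
    simp [Polynomial.mem_nthRootsFinset hd0]
  rw [this, hprim.card_nthRootsFinset]

lemma card_root_bound (q' : ℕ) (hq' : 2 ≤ q') (a b e : K) (ha : a ≠ 0) {P : K → Prop}
    [DecidablePred P] (h : ∀ x, P x → a * x ^ q' + b * x + e = 0) :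
    (univ.filter P).card ≤ q' := by
  set p : K[X] := C a * X ^ q' + (C b * X + C e) with hp
  have hcoeff : p.coeff q' = a := by
    rw [hp]
    simp only [coeff_add, coeff_C_mul, coeff_X_pow, coeff_C, coeff_X, if_pos rfl]
    rw [if_neg (by omega : ¬(1 = q')), if_neg (by omega : ¬(q' = 0))]
    simp
  have hpne : p ≠ 0 := fun h0 => ha (by rw [← hcoeff, h0, coeff_zero])
  have hdeg : p.natDegree ≤ q' := by
    apply le_trans (natDegree_add_le _ _)
    rw [max_le_iff]
    constructor
    · exact le_trans (natDegree_C_mul_le _ _) (by simp)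
    · apply le_trans (natDegree_add_le _ _)
      rw [max_le_iff]
      constructor
      · exact le_trans (natDegree_C_mul_le _ _) (by simp; omega)
      · simp
  have hsub : univ.filter P ⊆ p.roots.toFinset := by
    intro x hx
    rw [Multiset.mem_toFinset, mem_roots hpne]
    have := h x (by simpa using hx)
    simp only [IsRoot, hp, eval_add, eval_mul, eval_pow, eval_C, eval_X]
    linear_combination this
  calc (univ.filter P).card ≤ p.roots.toFinset.card := Finset.card_le_card hsub
    _ ≤ Multiset.card p.roots := Multiset.toFinset_card_le _
    _ ≤ p.natDegree := p.card_roots'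
    _ ≤ q' := hdeg

omit [DecidableEq K] in
lemma root_of_dvd {m n : ℕ} (hm : 1 ≤ m) (hcard : Fintype.card K = 2 ^ (2 * m))
    (hdvd : (2 ^ m + 1) ∣ (2 ^ n + 1)) (c : K) :
    ∃ y : K, y ^ (2 ^ m + 1) = 1 ∧
      y ^ (2 ^ n + 1) + c * y ^ (2 ^ n) + c ^ (2 ^ m) * y + 1 = 0 := by
  haveI := charP_two hcard
  have h2 : (2 : K) = 0 := CharTwo.two_eq_zero
  by_cases hc0 : c = 0
  · refine ⟨1, one_pow _, ?_⟩
    subst hc0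
    rw [zero_pow (Nat.pos_of_ne_zero (by positivity)).ne']
    simp only [one_pow, mul_one, zero_mul]
    linear_combination h2
  · -- notation
    obtain ⟨m', rfl⟩ : ∃ m', m = m' + 1 := ⟨m - 1, by omega⟩
    set A : ℕ := 2 ^ m' with hA
    obtain ⟨A', hA'⟩ : ∃ A', A = A' + 1 := ⟨A - 1, by have := Nat.one_le_two_pow (n := m'); omega⟩
    have hqm : 2 ^ (m' + 1) = 2 * A := by rw [pow_succ, mul_comm]
    have h2m : 2 * (m' + 1) = 2 * m' + 2 := by ring
    have h4A : 2 ^ (2 * (m' + 1)) = 4 * A ^ 2 := by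
      rw [h2m, pow_add, mul_comm 2 m', pow_mul, hA]; ring
    set N : ℕ := 2 ^ (2 * (m' + 1)) - 1 with hN
    have hNval : N = 4 * A' ^ 2 + 8 * A' + 3 := by
      rw [hN, h4A, hA']
      have : 4 * (A' + 1) ^ 2 = 4 * A' ^ 2 + 8 * A' + 4 := by ring
      omega
    have hc1 : c ^ N = 1 := pow_sub_one hcard hc0
    set t : ℕ := (A' + 1) * (2 * A' + 1) with htval
    set y : K := c ^ t with hy
    have hymu : y ^ (2 ^ (m' + 1) + 1) = 1 := by
      rw [hy, ← pow_mul]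
      have : c ^ (t * (2 ^ (m' + 1) + 1)) = c ^ 0 :=
        pow_reduce c N hc1 (k := A) (by rw [htval, hqm, hA', hNval]; ring)
      simpa using this
    refine ⟨y, hymu, ?_⟩
    have hy0 : y ≠ 0 := by
      intro h
      rw [h] at hymu
      simp [zero_pow] at hymu
    -- y^(s+1) = 1
    obtain ⟨w, hw⟩ := hdvd
    have hs1 : y ^ (2 ^ n + 1) = 1 := by rw [hw, pow_mul, hymu, one_pow]
    -- y^s = y^q
    have hs : y ^ (2 ^ n) = y ^ (2 ^ (m' + 1)) := by
      have e1 : y ^ (2 ^ n) * y = 1 := by rw [← pow_succ, hs1]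
      have e2 : y ^ (2 ^ (m' + 1)) * y = 1 := by rw [← pow_succ, hymu]
      exact mul_right_cancel₀ hy0 (e1.trans e2.symm)
    -- c * y^q = c^q * y
    have key : c ^ (t * 2 ^ (m' + 1) + 1) = c ^ (2 ^ (m' + 1) + t) :=
      pow_reduce c N hc1 (k := A') (by rw [htval, hqm, hA', hNval]; ring)
    have hx : c * y ^ (2 ^ (m' + 1)) = c ^ (2 ^ (m' + 1)) * y := by
      calc c * y ^ (2 ^ (m' + 1)) = c ^ (t * 2 ^ (m' + 1) + 1) := by
            rw [hy, ← pow_mul, mul_comm c, ← pow_succ]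
        _ = c ^ (2 ^ (m' + 1) + t) := key
        _ = c ^ (2 ^ (m' + 1)) * y := by rw [pow_add, hy]
    rw [hs1, hs]
    linear_combination hx + (c ^ (2 ^ (m' + 1)) * y + 1) * h2


omit [DecidableEq K] in
lemma root_of_q2 {n : ℕ} (hcard : Fintype.card K = 2 ^ (2 * 1))
    (hnd : ¬ (2 ^ 1 + 1) ∣ (2 ^ n + 1)) (c : K) :
    ∃ y : K, y ^ (2 ^ 1 + 1) = 1 ∧
      y ^ (2 ^ n + 1) + c * y ^ (2 ^ n) + c ^ (2 ^ 1) * y + 1 = 0 := by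
  haveI := charP_two hcard
  have h2 : (2 : K) = 0 := CharTwo.two_eq_zero
  have hmod : 2 ^ n % 3 = 1 ∨ 2 ^ n % 3 = 2 := by
    induction n with
    | zero => left; rfl
    | succ k ih =>
      have h : 2 ^ (k + 1) = 2 * 2 ^ k := by rw [pow_succ]; ring
      omega
  have hmod1 : 2 ^ n % 3 = 1 := by
    rcases hmod with h | h
    · exact h
    · exact absurd (by omega : (2 ^ 1 + 1) ∣ (2 ^ n + 1)) hnd
  obtain ⟨w, hw⟩ : ∃ w, 2 ^ n = 3 * w + 1 := ⟨2 ^ n / 3, by omega⟩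
  have hc4 : c ^ (2 ^ (2 * 1)) = c := pow_card_self hcard c
  norm_num at hc4
  set t : K := c + c ^ 2 with htdef
  have ht : t * (t + 1) = 0 := by
    have hsq : t ^ 2 = t := by
      have : t ^ 2 = c ^ 2 + c ^ 4 := by rw [htdef]; linear_combination c^3 * h2
      rw [this, hc4]; ring
    linear_combination hsq + t * h2
  rcases mul_eq_zero.mp ht with ht0 | ht1
  · refine ⟨1, one_pow _, ?_⟩
    simp only [one_pow, mul_one]
    linear_combination ht0 + h2
  · have ht1' : c + c ^ 2 = 1 := by
      have : t = 1 := by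
        have := eq_neg_of_add_eq_zero_left ht1
        rwa [CharTwo.neg_eq] at this
      rw [← this]
    have hc3 : c ^ 3 = 1 := by linear_combination (c - 1) * ht1' + (c - 1) * h2
    have hcs : c ^ (2 ^ n) = c := by
      rw [hw, pow_add, pow_mul, hc3, one_pow, pow_one, one_mul]
    refine ⟨c, by norm_num [hc3], ?_⟩
    rw [pow_succ, hcs]
    norm_num
    linear_combination hc3 + (c ^ 2 + 1) * h2


lemma no_root_deg {m n : ℕ} (hm2 : 2 ≤ m) (hn : 1 ≤ n)
    (hcard : Fintype.card K = 2 ^ (2 * m)) (hdvd : (2 ^ m + 1) ∣ (2 ^ n - 1)) :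
    ∃ c : K, ∀ y : K, y ^ (2 ^ m + 1) = 1 →
      y ^ (2 ^ n + 1) + c * y ^ (2 ^ n) + c ^ (2 ^ m) * y + 1 ≠ 0 := by
  haveI := charP_two hcard
  have h2 : (2 : K) = 0 := CharTwo.two_eq_zero
  have hq4 : 4 ≤ 2 ^ m := by calc (4:ℕ) = 2 ^ 2 := rfl
                                 _ ≤ 2 ^ m := Nat.pow_le_pow_right (by norm_num) hm2
  have hq2 : 2 ≤ 2 ^ m := by omega
  -- the subfield-fixed set
  set Fix : Finset K := univ.filter (fun x : K => x ^ 2 ^ m = x) with hFix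
  have hFixmem : ∀ x : K, x ∈ Fix ↔ x ^ 2 ^ m = x := by intro x; simp [hFix]
  have hFixcard : Fix.card ≤ 2 ^ m := by
    apply card_root_bound (2 ^ m) hq2 1 1 0 one_ne_zero
    intro x hx
    rw [one_mul, one_mul, add_zero]
    rw [hx]
    exact CharTwo.add_self_eq_zero x
  -- image of the trace map
  set ψ : K → K := fun x => x + x ^ 2 ^ m with hψ
  set imφ : Finset K := univ.image ψ with himφ
  have himsub : imφ ⊆ Fix := by
    intro x hx
    rw [himφ, mem_image] at hx
    obtain ⟨c, _, rfl⟩ := hx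
    rw [hFixmem]
    simp only [hψ]
    rw [frob_add hcard, qq_self hcard]
    ring
  have himcard : 2 ^ m ≤ imφ.card := by
    have hfib : ∀ b ∈ (univ : Finset K).image ψ, (univ.filter (fun x => ψ x = b)).card ≤ 2 ^ m := by
      intro b hb
      obtain ⟨c, _, rfl⟩ := mem_image.mp hb
      calc (univ.filter (fun x => ψ x = ψ c)).card
          ≤ Fix.card := by
            apply Finset.card_le_card_of_injOn (fun x => x + c)
            · intro x hx
              rw [Finset.mem_coe, mem_filter] at hx
              rw [Finset.mem_coe, hFixmem]
              rw [frob_add hcard]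
              have h3 := hx.2
              simp only [hψ] at h3
              linear_combination -h3 + (x ^ 2 ^ m - c) * h2
            · intro x _ x' _ hxx
              exact add_right_cancel hxx
        _ ≤ 2 ^ m := hFixcard
    have := Finset.card_le_mul_card_image (univ : Finset K) (2 ^ m) hfib
    rw [Finset.card_univ, hcard] at this
    have h22 : 2 ^ (2 * m) = 2 ^ m * 2 ^ m := by rw [two_mul, pow_add]
    rw [h22] at this
    exact Nat.le_of_mul_le_mul_left this (by positivity)
  have hFixeq : imφ = Fix := Finset.eq_of_subset_of_card_le himsub (le_trans hFixcard himcard)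
  -- roots of unity
  set μF : Finset K := univ.filter (fun y : K => y ^ (2 ^ m + 1) = 1) with hμF
  have hdvd1 : (2 ^ m + 1) ∣ Fintype.card K - 1 := by
    rw [hcard, q2_fact m]; exact Dvd.intro _ rfl
  have hμcard : μF.card = 2 ^ m + 1 := card_roots_eq _ (by positivity) hdvd1
  have hμ1 : (1 : K) ∈ μF := by rw [hμF, mem_filter]; exact ⟨mem_univ _, one_pow _⟩
  -- image W
  set W : Finset K := μF.image ψ with hW
  have hWsub : W ⊆ Fix := by
    intro x hx
    rw [hW, mem_image] at hx
    obtain ⟨y, _, rfl⟩ := hx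
    rw [hFixmem]
    simp only [hψ]
    rw [frob_add hcard, qq_self hcard]
    ring
  set W' : Finset K := (μF.erase 1).image ψ with hW'
  have hWW' : W ⊆ insert 0 W' := by
    rw [hW, ← Finset.insert_erase hμ1, Finset.image_insert]
    have : ψ 1 = 0 := by simp only [hψ, one_pow]; linear_combination h2
    rw [this]
  have hW'2 : 2 * W'.card ≤ 2 ^ m := by
    have hsum : (μF.erase 1).card = ∑ w ∈ W', ((μF.erase 1).filter (fun y => ψ y = w)).card :=
      Finset.card_eq_sum_card_fiberwise (fun y hy => Finset.mem_image_of_mem ψ hy)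
    have hfib2 : ∀ w ∈ W', 2 ≤ ((μF.erase 1).filter (fun y => ψ y = w)).card := by
      intro w hw
      rw [hW', mem_image] at hw
      obtain ⟨y, hy, rfl⟩ := hw
      have hyμ : y ^ (2 ^ m + 1) = 1 := by
        have := Finset.mem_of_mem_erase hy
        rw [hμF, mem_filter] at this
        exact this.2
      have hy1 : y ≠ 1 := Finset.ne_of_mem_erase hy
      have hyq1 : y ^ 2 ^ m ≠ 1 := by
        intro h
        apply hy1
        calc y = (y ^ 2 ^ m) ^ 2 ^ m := (qq_self hcard y).symm
          _ = 1 := by rw [h, one_pow]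
      have hyqy : y ^ 2 ^ m ≠ y := by
        intro h
        apply hy1
        have hsq : y * y = 1 := by
          calc y * y = y ^ 2 ^ m * y := by rw [h]
            _ = y ^ (2 ^ m + 1) := by rw [pow_succ]
            _ = 1 := hyμ
        have : (y + 1) * (y + 1) = 0 := by linear_combination hsq + (y + 1) * h2
        have := mul_self_eq_zero.mp this
        linear_combination this - h2
      have hyqmem : y ^ 2 ^ m ∈ (μF.erase 1) := by
        apply Finset.mem_erase_of_ne_of_mem hyq1
        rw [hμF, mem_filter]
        refine ⟨mem_univ _, ?_⟩
        rw [← pow_mul, mul_comm, pow_mul, hyμ, one_pow]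
      refine Finset.one_lt_card.mpr ⟨y, ?_, y ^ 2 ^ m, ?_, fun h => hyqy h.symm⟩
      · rw [mem_filter]; exact ⟨hy, rfl⟩
      · rw [mem_filter]
        refine ⟨hyqmem, ?_⟩
        simp only [hψ]
        rw [qq_self hcard]
        ring
    have : 2 * W'.card ≤ ∑ w ∈ W', ((μF.erase 1).filter (fun y => ψ y = w)).card := by
      calc 2 * W'.card = ∑ _w ∈ W', 2 := by rw [Finset.sum_const, smul_eq_mul, mul_comm]
        _ ≤ _ := Finset.sum_le_sum hfib2
    have herase : (μF.erase 1).card = 2 ^ m := by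
      rw [Finset.card_erase_of_mem hμ1, hμcard]; omega
    omega
  have hWcard : W.card < 2 ^ m := by
    have h1 : W.card ≤ W'.card + 1 := le_trans (Finset.card_le_card hWW') (Finset.card_insert_le _ _)
    omega
  -- pick t
  have hFixW : (Fix \ W).Nonempty := by
    rw [← Finset.card_pos]
    have := Finset.le_card_sdiff W Fix
    have hFc : 2 ^ m ≤ Fix.card := le_trans himcard (Finset.card_le_card himsub)
    omega
  obtain ⟨t, ht⟩ := hFixW
  have htFix : t ∈ Fix := (Finset.mem_sdiff.mp ht).1
  have htW : t ∉ W := (Finset.mem_sdiff.mp ht).2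
  rw [← hFixeq, himφ, mem_image] at htFix
  obtain ⟨c, _, hc⟩ := htFix
  refine ⟨c, ?_⟩
  intro y hyμ hroot
  apply htW
  -- y^s = y
  obtain ⟨v, hv⟩ := hdvd
  have hsplit : 2 ^ n = (2 ^ m + 1) * v + 1 := by
    have h1 : 1 ≤ 2 ^ n := Nat.one_le_two_pow
    omega
  have hys : y ^ 2 ^ n = y := by
    rw [hsplit, pow_add, pow_mul, hyμ, one_pow, pow_one, one_mul]
  -- reduce root equation
  have hy0 : y ≠ 0 := by
    intro h; rw [h] at hyμ; simp [zero_pow] at hyμ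
  have heq : y ^ 2 * 1 + t * y + 1 = 0 := by
    rw [← hc]
    simp only [hψ]
    rw [pow_succ, hys] at hroot
    linear_combination hroot
  -- multiply by y^q
  have hyq1 : y ^ 2 ^ m * y = 1 := by rw [← pow_succ, hyμ]
  have hW_t : t = ψ y := by
    simp only [hψ]
    have expand : y ^ 2 * y ^ 2 ^ m + t * (y ^ 2 ^ m * y) + y ^ 2 ^ m = 0 := by
      linear_combination y ^ 2 ^ m * heq
    rw [hyq1] at expand
    have hy2q : y ^ 2 * y ^ 2 ^ m = y := by
      calc y ^ 2 * y ^ 2 ^ m = y ^ (2 + 2 ^ m) := by rw [pow_add]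
        _ = y ^ 1 := pow_reduce y (2 ^ m + 1) hyμ (k := 1) (by ring)
        _ = y := pow_one y
    rw [hy2q] at expand
    linear_combination expand - (y + y ^ 2 ^ m) * h2
  rw [hW_t, hW]
  apply Finset.mem_image_of_mem
  rw [hμF, mem_filter]
  exact ⟨mem_univ _, hyμ⟩


lemma no_root_main {m n : ℕ} (hm2 : 2 ≤ m) (hn : 1 ≤ n)
    (hcard : Fintype.card K = 2 ^ (2 * m))
    (hndvd : ¬ (2 ^ m + 1) ∣ (2 ^ n + 1)) (hndvd' : ¬ (2 ^ m + 1) ∣ (2 ^ n - 1)) :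
    ∃ c : K, ∀ y : K, y ^ (2 ^ m + 1) = 1 →
      y ^ (2 ^ n + 1) + c * y ^ (2 ^ n) + c ^ (2 ^ m) * y + 1 ≠ 0 := by
  haveI := charP_two hcard
  have h2 : (2 : K) = 0 := CharTwo.two_eq_zero
  have hq4 : 4 ≤ 2 ^ m := by calc (4:ℕ) = 2 ^ 2 := rfl
                                 _ ≤ 2 ^ m := Nat.pow_le_pow_right (by norm_num) hm2
  have hq2 : 2 ≤ 2 ^ m := by omega
  have hs1 : 1 ≤ 2 ^ n := Nat.one_le_two_pow
  have hdvdcard : (2 ^ m + 1) ∣ Fintype.card K - 1 := by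
    rw [hcard, q2_fact m]; exact Dvd.intro _ rfl
  by_contra hH
  push_neg at hH
  -- hH : ∀ c, ∃ y, y ^ (2^m+1) = 1 ∧ f = 0
  set μF : Finset K := univ.filter (fun y : K => y ^ (2 ^ m + 1) = 1) with hμF
  have hμcard : μF.card = 2 ^ m + 1 := card_roots_eq _ (by positivity) hdvdcard
  set R : K → Finset K := fun c => univ.filter (fun y =>
    y ^ (2 ^ m + 1) = 1 ∧ y ^ (2 ^ n + 1) + c * y ^ (2 ^ n) + c ^ (2 ^ m) * y + 1 = 0) with hR
  set S : K → Finset K := fun y => univ.filter (fun c =>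
    y ^ (2 ^ n + 1) + c * y ^ (2 ^ n) + c ^ (2 ^ m) * y + 1 = 0) with hS
  -- double counting
  have hdc : ∑ c : K, (R c).card = ∑ y ∈ μF, (S y).card := by
    have lhs : ∀ c : K, (R c).card = ∑ y : K, if y ^ (2 ^ m + 1) = 1 ∧
        y ^ (2 ^ n + 1) + c * y ^ (2 ^ n) + c ^ (2 ^ m) * y + 1 = 0 then 1 else 0 := by
      intro c; rw [hR]; exact Finset.card_filter _ _
    rw [Finset.sum_congr rfl (fun c _ => lhs c), Finset.sum_comm, hμF, Finset.sum_filter]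
    apply Finset.sum_congr rfl
    intro y _
    by_cases hy : y ^ (2 ^ m + 1) = 1
    · simp only [hy, if_true, true_and]
      rw [hS]
      exact (Finset.card_filter _ _).symm
    · simp [hy]
  -- upper bound
  have hupper : ∑ c : K, (R c).card ≤ (2 ^ m + 1) * 2 ^ m := by
    rw [hdc]
    have hb : ∀ y ∈ μF, (S y).card ≤ 2 ^ m := by
      intro y hy
      have hyμ : y ^ (2 ^ m + 1) = 1 := (mem_filter.mp hy).2
      have hy0 : y ≠ 0 := by intro h; rw [h] at hyμ; simp [zero_pow] at hyμ
      rw [hS]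
      apply card_root_bound (2 ^ m) hq2 y (y ^ (2 ^ n)) (y ^ (2 ^ n + 1) + 1) hy0
      intro c hc
      linear_combination hc
    calc ∑ y ∈ μF, (S y).card ≤ μF.card • 2 ^ m := Finset.sum_le_card_nsmul _ _ _ hb
      _ = (2 ^ m + 1) * 2 ^ m := by rw [hμcard, smul_eq_mul]
  -- every c has a root
  have hR1 : ∀ c : K, 1 ≤ (R c).card := by
    intro c
    obtain ⟨y, hy1, hy2⟩ := hH c
    rw [Nat.succ_le_iff, Finset.card_pos]
    exact ⟨y, by rw [hR]; exact mem_filter.mpr ⟨mem_univ _, hy1, hy2⟩⟩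
  -- the gcd  d
  set d : ℕ := Nat.gcd (2 ^ n + 1) (2 ^ m + 1) with hd
  have hd_pos : 0 < d := Nat.gcd_pos_of_pos_right _ (by positivity)
  have hd_dvd_q : d ∣ 2 ^ m + 1 := Nat.gcd_dvd_right _ _
  have hd_dvd_s : d ∣ 2 ^ n + 1 := Nat.gcd_dvd_left _ _
  have hd_le : d ≤ 2 ^ m + 1 := Nat.le_of_dvd (by positivity) hd_dvd_q
  have hd_ne : d ≠ 2 ^ m + 1 := by
    intro h
    exact hndvd (h ▸ hd_dvd_s)
  -- filter identification
  have hμd : μF.filter (fun c => c ^ (2 ^ n + 1) = 1) = univ.filter (fun y : K => y ^ d = 1) := by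
    ext x
    rw [hμF, Finset.filter_filter, mem_filter, mem_filter]
    constructor
    · rintro ⟨_, hx1, hx2⟩
      refine ⟨mem_univ _, ?_⟩
      have h1 : orderOf x ∣ 2 ^ m + 1 := orderOf_dvd_of_pow_eq_one hx1
      have h2' : orderOf x ∣ 2 ^ n + 1 := orderOf_dvd_of_pow_eq_one hx2
      exact orderOf_dvd_iff_pow_eq_one.mp (Nat.dvd_gcd h2' h1)
    · rintro ⟨_, hx⟩
      obtain ⟨k1, hk1⟩ := hd_dvd_q
      obtain ⟨k2, hk2⟩ := hd_dvd_s
      exact ⟨mem_univ _, by rw [hk1, pow_mul, hx, one_pow],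
        by rw [hk2, pow_mul, hx, one_pow]⟩
  set T : Finset K := μF.filter (fun c => ¬ c ^ (2 ^ n + 1) = 1) with hT
  have hTcard : T.card = 2 ^ m + 1 - d := by
    rw [hT, Finset.filter_not, Finset.card_sdiff_of_subset (Finset.filter_subset _ _), hμd,
      card_roots_eq d hd_pos (dvd_trans hd_dvd_q hdvdcard), hμcard]
  have h0μ : (0 : K) ∉ μF := by
    rw [hμF, mem_filter]
    rintro ⟨_, h⟩
    rw [zero_pow (by positivity)] at h
    exact zero_ne_one h
  -- every c ∈ T has ≥ 2 roots
  have hT2 : ∀ c ∈ T, 2 ≤ (R c).card := by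
    intro c hc
    rw [hT, Finset.filter_filter, mem_filter] at hc
    obtain ⟨_, hcμ, hcs⟩ := hc
    have hcR : c ∈ R c := by
      rw [hR, mem_filter]
      exact ⟨mem_univ _, hcμ, by linear_combination hcμ + (c ^ (2 ^ n) * c + 1) * h2⟩
    set y₀ : K := c ^ (2 ^ m * 2 ^ (2 * m * n - n)) with hy₀
    have hy₀μ : y₀ ^ (2 ^ m + 1) = 1 := by
      rw [hy₀, ← pow_mul, mul_comm, pow_mul, hcμ, one_pow]
    have hnle : n ≤ 2 * m * n := by
      calc n = 1 * n := (one_mul n).symm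
        _ ≤ 2 * m * n := Nat.mul_le_mul_right n (by omega)
    have hy₀s : y₀ ^ (2 ^ n) = c ^ (2 ^ m) := by
      rw [hy₀, ← pow_mul]
      have he : 2 ^ m * 2 ^ (2 * m * n - n) * 2 ^ n = 2 ^ (2 * m * n) * 2 ^ m := by
        rw [mul_assoc, ← pow_add]
        rw [(by omega : 2 * m * n - n + n = 2 * m * n)]
        ring
      rw [he, pow_mul, pow_card_iter hcard c n]
    have hy₀R : y₀ ∈ R c := by
      rw [hR, mem_filter]
      refine ⟨mem_univ _, hy₀μ, ?_⟩
      rw [pow_succ, hy₀s]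
      linear_combination hcμ + (c ^ (2 ^ m) * y₀ + 1) * h2
    have hy₀c : y₀ ≠ c := by
      intro h
      rw [h] at hy₀s
      apply hcs
      rw [pow_succ, hy₀s, ← pow_succ, hcμ]
    exact Finset.one_lt_card.mpr ⟨c, hcR, y₀, hy₀R, fun h => hy₀c h.symm⟩
  -- construct the special element A
  obtain ⟨y, hyord⟩ := exists_orderOf_eq' (K := K) (2 ^ m + 1) (by positivity) hdvdcard
  have hyμ : y ^ (2 ^ m + 1) = 1 := by rw [← hyord]; exact pow_orderOf_eq_one y
  have hys1 : y ^ (2 ^ n + 1) ≠ 1 := by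
    intro h
    exact hndvd (hyord ▸ orderOf_dvd_of_pow_eq_one h)
  have hy0 : y ≠ 0 := by intro h; rw [h] at hyμ; simp [zero_pow] at hyμ
  set g' : ℕ := Nat.gcd (2 ^ n - 1) (2 ^ m + 1) with hg'
  have hg'pos : 0 < g' := Nat.gcd_pos_of_pos_right _ (by positivity)
  have hg'dvd : g' ∣ 2 ^ m + 1 := Nat.gcd_dvd_right _ _
  have hg'dvd' : g' ∣ 2 ^ n - 1 := Nat.gcd_dvd_left _ _
  have hg'ne : g' ≠ 2 ^ m + 1 := fun h => hndvd' (h ▸ hg'dvd')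
  have hg'3 : 3 * g' ≤ 2 ^ m + 1 := by
    obtain ⟨k, hk⟩ := hg'dvd
    have hk0 : k ≠ 0 := by rintro rfl; omega
    have hk1 : k ≠ 1 := by rintro rfl; rw [mul_one] at hk; exact hg'ne hk.symm
    have hk2 : k ≠ 2 := by
      rintro rfl
      obtain ⟨u, hu⟩ : ∃ u, 2 ^ m = 2 * u := ⟨2 ^ (m - 1), by
        rw [← pow_succ']; congr 1; omega⟩
      omega
    have hk3 : 3 ≤ k := by omega
    calc 3 * g' ≤ k * g' := Nat.mul_le_mul_right g' hk3
      _ = 2 ^ m + 1 := by rw [mul_comm]; exact hk.symm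
  -- bad set
  set Bd : Finset K := μF.filter (fun y' => y' ^ (2 ^ n - 1) = y ^ (2 ^ n - 1) ∨
    y' * y ^ (2 ^ n) = 1 ∨ y' ^ (2 ^ n) * y = 1) with hBd
  have hBdcard : Bd.card ≤ g' + 2 := by
    rw [hBd, Finset.filter_or, Finset.filter_or]
    have c1 : (μF.filter (fun y' => y' ^ (2 ^ n - 1) = y ^ (2 ^ n - 1))).card ≤ g' := by
      have hg'univ : (univ.filter fun u : K => u ^ g' = 1).card = g' :=
        card_roots_eq g' hg'pos (dvd_trans hg'dvd hdvdcard)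
      rw [← hg'univ]
      apply Finset.card_le_card_of_injOn (fun y' => y' * y ^ (2 ^ m))
      · intro y' hy'
        rw [Finset.mem_coe, mem_filter] at hy' ⊢
        obtain ⟨hy'μ, hy'e⟩ := hy'
        rw [hμF, mem_filter] at hy'μ
        refine ⟨mem_univ _, ?_⟩
        have hu1 : (y' * y ^ (2 ^ m)) ^ (2 ^ m + 1) = 1 := by
          rw [mul_pow, hy'μ.2, one_mul, ← pow_mul, mul_comm (2^m), pow_mul, hyμ, one_pow]
        have hu2 : (y' * y ^ (2 ^ m)) ^ (2 ^ n - 1) = 1 := by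
          rw [mul_pow, hy'e, ← pow_mul, ← pow_add]
          have : 2 ^ n - 1 + 2 ^ m * (2 ^ n - 1) = (2 ^ m + 1) * (2 ^ n - 1) := by ring
          rw [this, pow_mul, hyμ, one_pow]
        exact orderOf_dvd_iff_pow_eq_one.mp
          (Nat.dvd_gcd (orderOf_dvd_of_pow_eq_one hu2) (orderOf_dvd_of_pow_eq_one hu1))
      · intro a _ b _ hab
        exact mul_right_cancel₀ (pow_ne_zero _ hy0) hab
    have c2 : (μF.filter (fun y' => y' * y ^ (2 ^ n) = 1)).card ≤ 1 := by
      apply Finset.card_le_one.mpr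
      intro a ha b hb
      rw [mem_filter] at ha hb
      exact mul_right_cancel₀ (pow_ne_zero _ hy0) (ha.2.trans hb.2.symm)
    have c3 : (μF.filter (fun y' => y' ^ (2 ^ n) * y = 1)).card ≤ 1 := by
      apply Finset.card_le_one.mpr
      intro a ha b hb
      rw [mem_filter] at ha hb
      exact frob_inj hcard n (mul_right_cancel₀ hy0 (ha.2.trans hb.2.symm))
    calc (μF.filter _ ∪ (μF.filter _ ∪ μF.filter _)).card
        ≤ _ + (μF.filter _ ∪ μF.filter _).card := Finset.card_union_le _ _
      _ ≤ _ + (_ + _) := Nat.add_le_add_left (Finset.card_union_le _ _) _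
      _ ≤ g' + (1 + 1) := by
          exact Nat.add_le_add c1 (Nat.add_le_add c2 c3)
      _ = g' + 2 := by ring
  have hμBd : (μF \ Bd).Nonempty := by
    rw [← Finset.card_pos]
    have h1 := Finset.le_card_sdiff Bd μF
    omega
  obtain ⟨y', hy's⟩ := hμBd
  have hy'μF : y' ∈ μF := (Finset.mem_sdiff.mp hy's).1
  have hy'Bd : y' ∉ Bd := (Finset.mem_sdiff.mp hy's).2
  have hy'μ : y' ^ (2 ^ m + 1) = 1 := (mem_filter.mp hy'μF).2
  have hy'0 : y' ≠ 0 := by intro h; rw [h] at hy'μ; simp [zero_pow] at hy'μ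
  rw [hBd, mem_filter, not_and, not_or, not_or] at hy'Bd
  obtain ⟨hc1, hc2, hc3⟩ := hy'Bd hy'μF
  have hyy' : y ≠ y' := fun h => hc1 (by rw [h])
  -- the determinant
  set D : K := y ^ (2 ^ n) * y' + y' ^ (2 ^ n) * y with hD
  have hDne : D ≠ 0 := by
    intro h
    apply hc1
    have hsplit : 2 ^ n = (2 ^ n - 1) + 1 := by omega
    rw [hD, hsplit, pow_succ, pow_succ] at h
    have h1 : y ^ (2 ^ n - 1) * (y * y') = y' ^ (2 ^ n - 1) * (y * y') := by
      linear_combination h - (y' ^ (2 ^ n - 1) * (y * y')) * h2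
    exact (mul_right_cancel₀ (mul_ne_zero hy0 hy'0) h1).symm
  set numA : K := (y ^ (2 ^ n + 1) + 1) * y' + (y' ^ (2 ^ n + 1) + 1) * y with hnumA
  set numB : K := (y ^ (2 ^ n + 1) + 1) * y' ^ (2 ^ n) + (y' ^ (2 ^ n + 1) + 1) * y ^ (2 ^ n)
    with hnumB
  set A : K := numA * D⁻¹ with hA
  set Bv : K := numB * D⁻¹ with hBv
  have hAD : A * D = numA := by rw [hA]; field_simp
  have hBD : Bv * D = numB := by rw [hBv]; field_simp
  have Eq1 : A * y ^ (2 ^ n) + Bv * y = y ^ (2 ^ n + 1) + 1 := by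
    apply mul_right_cancel₀ hDne
    calc (A * y ^ (2 ^ n) + Bv * y) * D = (A * D) * y ^ (2 ^ n) + (Bv * D) * y := by ring
      _ = numA * y ^ (2 ^ n) + numB * y := by rw [hAD, hBD]
      _ = (y ^ (2 ^ n + 1) + 1) * D := by
          rw [hnumA, hnumB, hD]
          linear_combination ((y' ^ (2 ^ n + 1) + 1) * y ^ (2 ^ n) * y) * h2
  have Eq2 : A * y' ^ (2 ^ n) + Bv * y' = y' ^ (2 ^ n + 1) + 1 := by
    apply mul_right_cancel₀ hDne
    calc (A * y' ^ (2 ^ n) + Bv * y') * D = (A * D) * y' ^ (2 ^ n) + (Bv * D) * y' := by ring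
      _ = numA * y' ^ (2 ^ n) + numB * y' := by rw [hAD, hBD]
      _ = (y' ^ (2 ^ n + 1) + 1) * D := by
          rw [hnumA, hnumB, hD]
          linear_combination ((y ^ (2 ^ n + 1) + 1) * y' ^ (2 ^ n) * y') * h2
  have htrans : ∀ z : K, z ^ (2 ^ m + 1) = 1 →
      A * z ^ (2 ^ n) + Bv * z = z ^ (2 ^ n + 1) + 1 →
      Bv ^ (2 ^ m) * z ^ (2 ^ n) + A ^ (2 ^ m) * z = z ^ (2 ^ n + 1) + 1 := by
    intro z hz hEq
    have e : A ^ (2 ^ m) * (z ^ (2 ^ n)) ^ (2 ^ m) + Bv ^ (2 ^ m) * z ^ (2 ^ m)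
        = (z ^ (2 ^ n + 1)) ^ (2 ^ m) + 1 := by
      rw [← mul_pow, ← mul_pow, ← frob_add hcard, hEq, frob_add hcard, one_pow]
    have r1 : (z ^ (2 ^ n)) ^ (2 ^ m) * z ^ (2 ^ n + 1) = z := by
      rw [← pow_mul, ← pow_add]
      have : z ^ (2 ^ n * 2 ^ m + (2 ^ n + 1)) = z ^ 1 :=
        pow_reduce z (2 ^ m + 1) hz (k := 2 ^ n) (by ring)
      rw [this, pow_one]
    have r2 : z ^ (2 ^ m) * z ^ (2 ^ n + 1) = z ^ (2 ^ n) := by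
      rw [← pow_add]
      exact pow_reduce z (2 ^ m + 1) hz (k := 1) (by ring)
    have r3 : (z ^ (2 ^ n + 1)) ^ (2 ^ m) * z ^ (2 ^ n + 1) = 1 := by
      rw [← pow_mul, ← pow_add]
      have : z ^ ((2 ^ n + 1) * 2 ^ m + (2 ^ n + 1)) = z ^ 0 :=
        pow_reduce z (2 ^ m + 1) hz (k := 2 ^ n + 1) (by ring)
      rw [this, pow_zero]
    have e2 : (A ^ (2 ^ m) * (z ^ (2 ^ n)) ^ (2 ^ m) + Bv ^ (2 ^ m) * z ^ (2 ^ m))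
        * z ^ (2 ^ n + 1) = ((z ^ (2 ^ n + 1)) ^ (2 ^ m) + 1) * z ^ (2 ^ n + 1) := by
      rw [e]
    linear_combination e2 - A ^ (2 ^ m) * r1 - Bv ^ (2 ^ m) * r2 + r3
  have hBq := htrans y hyμ Eq1
  have hBq' := htrans y' hy'μ Eq2
  have u1 : (A + Bv ^ (2 ^ m)) * y ^ (2 ^ n) + (Bv + A ^ (2 ^ m)) * y = 0 := by
    linear_combination Eq1 - hBq + (Bv ^ (2 ^ m) * y ^ (2 ^ n) + A ^ (2 ^ m) * y) * h2
  have u2 : (A + Bv ^ (2 ^ m)) * y' ^ (2 ^ n) + (Bv + A ^ (2 ^ m)) * y' = 0 := by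
    linear_combination Eq2 - hBq' + (Bv ^ (2 ^ m) * y' ^ (2 ^ n) + A ^ (2 ^ m) * y') * h2
  have hAD0 : (A + Bv ^ (2 ^ m)) * D = 0 := by
    rw [hD]
    linear_combination y' * u1 + y * u2 - ((Bv + A ^ (2 ^ m)) * y * y') * h2
  have ha0 : A + Bv ^ (2 ^ m) = 0 := by
    rcases mul_eq_zero.mp hAD0 with h | h
    · exact h
    · exact absurd h hDne
  have hb0 : Bv + A ^ (2 ^ m) = 0 := by
    have hby : (Bv + A ^ (2 ^ m)) * y = 0 := by
      linear_combination u1 - y ^ (2 ^ n) * ha0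
    rcases mul_eq_zero.mp hby with h | h
    · exact h
    · exact absurd h hy0
  have hBA : Bv = A ^ (2 ^ m) := by
    rw [← CharTwo.neg_eq (A ^ (2 ^ m))]
    exact eq_neg_of_add_eq_zero_left hb0
  have hfy : y ^ (2 ^ n + 1) + A * y ^ (2 ^ n) + A ^ (2 ^ m) * y + 1 = 0 := by
    linear_combination Eq1 - y * hBA + (y ^ (2 ^ n + 1) + 1) * h2
  have hfy' : y' ^ (2 ^ n + 1) + A * y' ^ (2 ^ n) + A ^ (2 ^ m) * y' + 1 = 0 := by
    linear_combination Eq2 - y' * hBA + (y' ^ (2 ^ n + 1) + 1) * h2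
  have hA0 : A ≠ 0 := by
    intro h
    have hBv0 : Bv = 0 := by rw [hBA, h, zero_pow (by positivity : 2 ^ m ≠ 0)]
    apply hys1
    rw [h, hBv0] at Eq1
    linear_combination -Eq1 - h2
  have hAμ : A ^ (2 ^ m + 1) ≠ 1 := by
    intro hA1
    have hf : ∀ z : K, z ^ (2 ^ n + 1) + A * z ^ (2 ^ n) + A ^ (2 ^ m) * z + 1 = 0 →
        (z ^ (2 ^ n) + A ^ (2 ^ m)) * (z + A) = 0 := by
      intro z hr
      linear_combination hr + hA1
    have key : ∀ z : K, (z ^ (2 ^ n) + A ^ (2 ^ m)) * (z + A) = 0 →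
        z ^ (2 ^ n) = A ^ (2 ^ m) ∨ z = A := by
      intro z hz
      rcases mul_eq_zero.mp hz with h | h
      · left; rw [← CharTwo.neg_eq (A ^ (2 ^ m))]; exact eq_neg_of_add_eq_zero_left h
      · right; rw [← CharTwo.neg_eq A]; exact eq_neg_of_add_eq_zero_left h
    rcases key y (hf y hfy) with h1 | h1 <;> rcases key y' (hf y' hfy') with h1' | h1'
    · exact hyy' (frob_inj hcard n (h1.trans h1'.symm))
    · apply hc2
      rw [h1', h1, ← pow_succ']
      exact hA1
    · apply hc3
      rw [h1', h1, ← pow_succ]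
      exact hA1
    · exact hyy' (h1.trans h1'.symm)
  -- A has two roots
  have hAμF : A ∉ μF := by
    rw [hμF, mem_filter]
    rintro ⟨_, h⟩
    exact hAμ h
  have hAT : A ∉ T := fun h => hAμF (Finset.mem_of_mem_filter A h)
  have h0T : (0 : K) ∉ T := fun h => h0μ (Finset.mem_of_mem_filter 0 h)
  have hRA : 2 ≤ (R A).card := by
    apply Finset.one_lt_card.mpr
    refine ⟨y, ?_, y', ?_, hyy'⟩
    · rw [hR]; exact mem_filter.mpr ⟨mem_univ _, hyμ, hfy⟩
    · rw [hR]; exact mem_filter.mpr ⟨mem_univ _, hy'μ, hfy'⟩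
  have hR0 : d ≤ (R 0).card := by
    have hsub : univ.filter (fun x : K => x ^ d = 1) ⊆ R 0 := by
      intro x hx
      rw [mem_filter] at hx
      obtain ⟨k1, hk1⟩ := hd_dvd_q
      obtain ⟨k2, hk2⟩ := hd_dvd_s
      rw [hR, mem_filter]
      refine ⟨mem_univ _, by rw [hk1, pow_mul, hx.2, one_pow], ?_⟩
      have hx1 : x ^ (2 ^ n + 1) = 1 := by rw [hk2, pow_mul, hx.2, one_pow]
      rw [hx1, zero_pow (by positivity : 2 ^ m ≠ 0)]
      linear_combination h2
    calc d = (univ.filter (fun x : K => x ^ d = 1)).card :=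
          (card_roots_eq d hd_pos (dvd_trans hd_dvd_q hdvdcard)).symm
      _ ≤ (R 0).card := Finset.card_le_card hsub
  -- final counting
  set E : Finset K := insert (0 : K) (insert A T) with hE
  have h0iAT : (0 : K) ∉ insert A T := by
    rw [Finset.mem_insert]
    rintro (h | h)
    · exact hA0 h.symm
    · exact h0T h
  have hEcard : E.card = T.card + 2 := by
    rw [hE, Finset.card_insert_of_notMem h0iAT, Finset.card_insert_of_notMem hAT]
  have hEsub : E ⊆ univ := Finset.subset_univ E
  have hsplitE : ∑ c ∈ univ \ E, (R c).card + ∑ c ∈ E, (R c).card = ∑ c : K, (R c).card :=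
    Finset.sum_sdiff hEsub
  have hsumE : ∑ c ∈ E, (R c).card = (R 0).card + ((R A).card + ∑ c ∈ T, (R c).card) := by
    rw [hE, Finset.sum_insert h0iAT, Finset.sum_insert hAT]
  have hsumT : 2 * T.card ≤ ∑ c ∈ T, (R c).card := by
    calc 2 * T.card = ∑ _c ∈ T, 2 := by rw [Finset.sum_const, smul_eq_mul, mul_comm]
      _ ≤ _ := Finset.sum_le_sum hT2
  have hsumRest : (univ \ E).card ≤ ∑ c ∈ univ \ E, (R c).card := by
    calc (univ \ E).card = ∑ _c ∈ univ \ E, 1 := by rw [Finset.sum_const, smul_eq_mul, mul_one]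
      _ ≤ _ := Finset.sum_le_sum (fun c _ => hR1 c)
  have hcardsdiff : (univ \ E).card = 2 ^ (2 * m) - (T.card + 2) := by
    rw [Finset.card_sdiff_of_subset hEsub, Finset.card_univ, hcard, hEcard]
  have hpow2 : 2 ^ (2 * m) = 2 ^ m * 2 ^ m := by rw [two_mul, pow_add]
  have hmul : (2 ^ m + 1) * 2 ^ m = 2 ^ m * 2 ^ m + 2 ^ m := by ring
  have hbig : 4 * 2 ^ m ≤ 2 ^ m * 2 ^ m := Nat.mul_le_mul_right _ hq4
  omega


end Stmt12Aux

/-- Theorem 2: there exists `c ∈ F_{r^2}` such that `y^{s+1} + c y^s + c^r y + 1` has no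
root in `μ_{r+1}` iff `r > 2` and `r + 1` does not divide `s + 1`. -/
theorem stmt12 (m n : ℕ) (hm : 1 ≤ m) (hn : 1 ≤ n)
    (K : Type) [Field K] [Fintype K] (hcard : Fintype.card K = 2 ^ (2 * m)) :
    (∃ c : K, ∀ y : K, y ^ (2 ^ m + 1) = 1 →
        y ^ (2 ^ n + 1) + c * y ^ (2 ^ n) + c ^ (2 ^ m) * y + 1 ≠ 0)
      ↔ (2 < 2 ^ m ∧ ¬ (2 ^ m + 1) ∣ (2 ^ n + 1)) := by
  classical
  constructor
  · rintro ⟨c, hc⟩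
    by_contra hcon
    rw [not_and_or] at hcon
    by_cases hdvd : (2 ^ m + 1) ∣ (2 ^ n + 1)
    · obtain ⟨y, h1, h2⟩ := Stmt12Aux.root_of_dvd hm hcard hdvd c
      exact hc y h1 h2
    · have hm1 : m = 1 := by
        rcases hcon with h | h
        · have ha : 2 ^ m ≤ 2 := by omega
          have hb : 2 ^ 1 ≤ 2 ^ m := Nat.pow_le_pow_right (by norm_num) hm
          have he : 2 ^ m = 2 ^ 1 := le_antisymm (by simpa using ha) hb
          exact Nat.pow_right_injective (le_refl 2) he
        · exact absurd (not_not.mp h) hdvd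
      subst hm1
      obtain ⟨y, h1, h2⟩ := Stmt12Aux.root_of_q2 hcard hdvd c
      exact hc y h1 h2
  · rintro ⟨h2q, hndvd⟩
    have hm2 : 2 ≤ m := by
      by_contra h
      have hm1 : m = 1 := by omega
      subst hm1
      norm_num at h2q
    by_cases hdeg : (2 ^ m + 1) ∣ (2 ^ n - 1)
    · exact Stmt12Aux.no_root_deg hm2 hn hcard hdeg
    · exact Stmt12Aux.no_root_main hm2 hn hcard hndvd hdeg
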